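/- Every C* set in a discrete commutative semigroup S is a central* set; equivalently, every idempotent in the smallest ideal K(βS) belongs to J(S), so a set belonging to all idempotents of J(S) belongs to all minimal idempotents. -/

import Mathlib

attribute [local instance] Ultrafilter.semigroup

variable {S : Type*}

/-- The product `∏_{t ∈ H} f t` in a (commutative) semigroup, computed in increasing
order of indices; junk value `f 0` if `H = ∅`. -/
def semigroupProd [Semigroup S] (f : ℕ → S) (H : Finset ℕ) : S :=
  if h : H.Nonempty then
    (((H.erase (H.min' h)).sort (· ≤ ·)).map f).foldl (· * ·) (f (H.min' h))
  else f 0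

/-- `A` is a J-set in the commutative semigroup `S`. -/
def IsJSet [CommSemigroup S] (A : Set S) : Prop :=
  ∀ F : Finset (ℕ → S), ∃ (a : S) (H : Finset ℕ), H.Nonempty ∧
    ∀ f ∈ F, a * semigroupProd f H ∈ A

/-- `J(S)`: the ultrafilters on `S` all of whose members are J-sets. -/
def JSetUltra [CommSemigroup S] : Set (Ultrafilter S) :=
  {p | ∀ A ∈ p, IsJSet A}

/-- `I` is a two-sided ideal of `βS`. -/
def IsUltraIdeal [Semigroup S] (I : Set (Ultrafilter S)) : Prop :=
  I.Nonempty ∧ ∀ p ∈ I, ∀ q : Ultrafilter S, q * p ∈ I ∧ p * q ∈ I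

/-- `p` lies in the smallest two-sided ideal `K(βS)`. -/
def InSmallestIdeal [Semigroup S] (p : Ultrafilter S) : Prop :=
  ∀ I : Set (Ultrafilter S), IsUltraIdeal I → p ∈ I

/- ### Auxiliary lemmas -/

lemma foldl_coe_aux [CommSemigroup S] (l : List S) (a : S) :
    WithOne.coe (l.foldl (· * ·) a) = WithOne.coe a * (l.map WithOne.coe).prod := by
  induction l generalizing a with
  | nil => simp
  | cons t l ih => simp [ih (a * t), mul_assoc]

/-- `semigroupProd` coincides with the ordinary finite product in `WithOne S`. -/
lemma coe_semigroupProd [CommSemigroup S] (f : ℕ → S) (H : Finset ℕ) (h : H.Nonempty) :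
    WithOne.coe (semigroupProd f H) = ∏ t ∈ H, WithOne.coe (f t) := by
  rw [semigroupProd, dif_pos h, foldl_coe_aux]
  rw [← Finset.mul_prod_erase H (fun t => WithOne.coe (f t)) (H.min'_mem h)]
  congr 1
  rw [Finset.prod_eq_multiset_prod, ← Finset.sort_eq (s := H.erase (H.min' h)) (r := (· ≤ ·))]
  simp only [Multiset.map_coe, Multiset.prod_coe, List.map_map]
  rfl

lemma prod_coe_exists [CommSemigroup S] {ι : Type*} (u : Finset ι) (g : ι → S) (a : S) :
    ∃ b : S, WithOne.coe a * ∏ i ∈ u, WithOne.coe (g i) = WithOne.coe b := by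
  classical
  induction u using Finset.induction generalizing a with
  | empty => exact ⟨a, by simp⟩
  | insert i u hx ih =>
    obtain ⟨b, hb⟩ := ih (a * g i)
    exact ⟨b, by rw [Finset.prod_insert hx, ← mul_assoc, ← WithOne.coe_mul, hb]⟩

/-- The Hales–Jewett based key combinatorial lemma: for any finite colouring of `S` and any
finite family `F` of sequences, there are `a` and nonempty `H` such that all the products
`a * ∏_{t ∈ H} f t`, `f ∈ F`, get the same colour. -/
lemma key_HJ [CommSemigroup S] {κ : Type*} [Finite κ] (c : S → κ) (F : Finset (ℕ → S))
    (hF : F.Nonempty) :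
    ∃ (k : κ) (a : S) (H : Finset ℕ), H.Nonempty ∧
      ∀ f ∈ F, c (a * semigroupProd f H) = k := by
  classical
  obtain ⟨f₀, hf₀⟩ := hF
  obtain ⟨ι, _inst, hHJ⟩ := Combinatorics.Line.exists_mono_in_high_dimension {f // f ∈ F} κ
  set e : ι → ℕ := fun i => ((Fintype.equivFin ι) i : ℕ) with he
  have he_inj : Function.Injective e := fun i j h =>
    (Fintype.equivFin ι).injective (Fin.val_injective h)
  have hPc : ∀ w : ι → {f // f ∈ F},
      ∃ b : S, WithOne.coe (f₀ 0) * ∏ i, WithOne.coe ((w i).1 (e i)) = WithOne.coe b :=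
    fun w => prod_coe_exists _ _ _
  choose σ hσ using hPc
  obtain ⟨l, k, hl⟩ := hHJ (fun w => c (σ w))
  set moving : Finset ι := Finset.univ.filter (fun i => l.idxFun i = none) with hmov
  set H : Finset ℕ := moving.image e with hHdef
  have hHne : H.Nonempty := by
    obtain ⟨i, hi⟩ := l.proper
    exact ⟨e i, Finset.mem_image_of_mem e (by simp [hmov, hi])⟩
  obtain ⟨a, ha⟩ := prod_coe_exists (Finset.univ.filter (fun i => ¬ l.idxFun i = none))
    (fun i => (l ⟨f₀, hf₀⟩ i).1 (e i)) (f₀ 0)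
  refine ⟨k, a, H, hHne, ?_⟩
  have main : ∀ x : {f // f ∈ F}, σ (l x) = a * semigroupProd x.1 H := by
    intro x
    have h1 : WithOne.coe (f₀ 0) * ∏ i, WithOne.coe ((l x i).1 (e i))
        = WithOne.coe (a * semigroupProd x.1 H) := by
      rw [WithOne.coe_mul, ← ha, coe_semigroupProd _ _ hHne]
      rw [← Finset.prod_filter_mul_prod_filter_not Finset.univ (fun i => l.idxFun i = none)
        (fun i => WithOne.coe ((l x i).1 (e i)))]
      have hmv : ∏ i ∈ Finset.univ.filter (fun i => l.idxFun i = none),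
          WithOne.coe ((l x i).1 (e i)) = ∏ t ∈ H, WithOne.coe (x.1 t) := by
        rw [hHdef, Finset.prod_image (fun i _ j _ h => he_inj h)]
        refine Finset.prod_congr rfl fun i hi => ?_
        have : l.idxFun i = none := (Finset.mem_filter.mp hi).2
        simp [Combinatorics.Line.apply_def, this]
      have hfx : ∏ i ∈ Finset.univ.filter (fun i => ¬ l.idxFun i = none),
          WithOne.coe ((l x i).1 (e i))
          = ∏ i ∈ Finset.univ.filter (fun i => ¬ l.idxFun i = none),
            WithOne.coe ((l ⟨f₀, hf₀⟩ i).1 (e i)) := by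
        refine Finset.prod_congr rfl fun i hi => ?_
        have h2 : ¬ l.idxFun i = none := (Finset.mem_filter.mp hi).2
        obtain ⟨b, hb⟩ := Option.ne_none_iff_exists'.mp h2
        simp [Combinatorics.Line.apply_def, hb]
      rw [hmv, hfx, mul_comm (∏ t ∈ H, WithOne.coe (x.1 t)), ← mul_assoc]
    have h2 := hσ (l x)
    rw [h1] at h2
    exact WithOne.coe_inj.mp h2.symm
  intro f hf
  simpa only [main ⟨f, hf⟩] using hl ⟨f, hf⟩

/-- Non-J-sets cannot cover `S` (finite unions of non-J-sets avoid some point): this is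
partition regularity of J-sets. -/
lemma exists_not_mem_of_forall_not_jset [CommSemigroup S] [Nonempty S] (T : Finset (Set S))
    (hT : ∀ A ∈ T, ¬ IsJSet A) : ∃ s : S, ∀ A ∈ T, s ∉ A := by
  classical
  by_contra hc
  push_neg at hc
  have hcover : ∀ s : S, ∃ A : {A // A ∈ T}, s ∈ A.1 := by
    intro s; obtain ⟨A, hA, hs⟩ := hc s; exact ⟨⟨A, hA⟩, hs⟩
  choose cc hcc using hcover
  have hW : ∀ A : {A // A ∈ T}, ∃ Fw : Finset (ℕ → S),
      ∀ (a : S) (H : Finset ℕ), H.Nonempty → ∃ f ∈ Fw, a * semigroupProd f H ∉ A.1 := by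
    intro A
    have h := hT A.1 A.2
    rw [IsJSet] at h
    push_neg at h
    exact h
  choose W hW' using hW
  set F : Finset (ℕ → S) :=
    insert (fun _ => Classical.arbitrary S) (T.attach.biUnion fun A => W A) with hF
  have hFne : F.Nonempty := ⟨_, Finset.mem_insert_self _ _⟩
  obtain ⟨⟨A, hA⟩, a, H, hHne, hk⟩ := key_HJ cc F hFne
  obtain ⟨f, hfW, hfA⟩ := hW' ⟨A, hA⟩ a H hHne
  have hfF : f ∈ F := by
    rw [hF]
    exact Finset.mem_insert_of_mem (Finset.mem_biUnion.mpr ⟨⟨A, hA⟩, Finset.mem_attach _ _, hfW⟩)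
  have := hcc (a * semigroupProd f H)
  rw [hk f hfF] at this
  exact hfA this

/-- `J(S)` is nonempty: there exists an ultrafilter all of whose members are J-sets. -/
lemma jsetUltra_nonempty [CommSemigroup S] [Nonempty S] : (JSetUltra (S := S)).Nonempty := by
  classical
  have hne : (Filter.generate {C : Set S | ¬ IsJSet Cᶜ}).NeBot := by
    rw [Filter.generate_neBot_iff]
    intro t hts htf
    obtain ⟨s, hs⟩ := exists_not_mem_of_forall_not_jset (S := S) (htf.toFinset.image compl)
      (fun A hA => by
        obtain ⟨C, hC, rfl⟩ := Finset.mem_image.mp hA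
        exact hts (htf.mem_toFinset.mp hC))
    refine ⟨s, ?_⟩
    rw [Set.mem_sInter]
    intro C hC
    have := hs Cᶜ (Finset.mem_image_of_mem compl (htf.mem_toFinset.mpr hC))
    simpa using this
  obtain ⟨p, hp⟩ := Ultrafilter.exists_le (Filter.generate {C : Set S | ¬ IsJSet Cᶜ})
  refine ⟨p, fun A hA => ?_⟩
  by_contra hA'
  have h1 : Aᶜ ∈ Filter.generate {C : Set S | ¬ IsJSet Cᶜ} :=
    Filter.mem_generate_of_mem (by simpa using hA')
  have h2 : Aᶜ ∈ p := hp h1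
  exact (Ultrafilter.compl_mem_iff_notMem.mp h2) hA

lemma mem_mul_iff [Semigroup S] (U V : Ultrafilter S) (B : Set S) :
    B ∈ U * V ↔ {s | {t | s * t ∈ B} ∈ V} ∈ U := by
  have h := Ultrafilter.eventually_mul U V (· ∈ B)
  simp only [Filter.eventually_iff, Ultrafilter.mem_coe, Set.setOf_mem_eq] at h
  exact h

/-- `J(S)` is a two-sided ideal of `βS`. -/
lemma jsetUltra_ideal [CommSemigroup S] [Nonempty S] : IsUltraIdeal (JSetUltra (S := S)) := by
  refine ⟨jsetUltra_nonempty, fun p hp q => ⟨?_, ?_⟩⟩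
  · -- q * p absorbs on the left
    intro A hA
    rw [mem_mul_iff] at hA
    obtain ⟨s, hs⟩ := Ultrafilter.nonempty_of_mem hA
    intro Fw
    obtain ⟨a, H, hHne, hprod⟩ := hp _ hs Fw
    refine ⟨s * a, H, hHne, fun f hf => ?_⟩
    have := hprod f hf
    simpa [mul_assoc] using this
  · -- p * q absorbs on the right
    intro A hA
    rw [mem_mul_iff] at hA
    intro Fw
    obtain ⟨a, H, hHne, hprod⟩ := hp _ hA Fw
    have hint : (⋂ f ∈ Fw, {t : S | (a * semigroupProd f H) * t ∈ A}) ∈ (q : Filter S) :=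
      (Filter.biInter_finset_mem Fw).mpr fun f hf => hprod f hf
    obtain ⟨t, ht⟩ := Ultrafilter.nonempty_of_mem hint
    simp only [Set.mem_iInter, Set.mem_setOf_eq] at ht
    refine ⟨a * t, H, hHne, fun f hf => ?_⟩
    have := ht f hf
    rwa [mul_right_comm] at this

/-- Every idempotent of `K(βS)` lies in `J(S)`; consequently every C* set
(a set belonging to all idempotents of `J(S)`) is central*
(belongs to every minimal idempotent). -/
theorem cStar_implies_centralStar [CommSemigroup S] :
    (∀ p : Ultrafilter S, p * p = p → InSmallestIdeal p → p ∈ JSetUltra) ∧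
      ∀ A : Set S, (∀ p ∈ JSetUltra (S := S), p * p = p → A ∈ p) →
        ∀ p : Ultrafilter S, p * p = p → InSmallestIdeal p → A ∈ p := by
  have main : ∀ p : Ultrafilter S, InSmallestIdeal p → p ∈ JSetUltra := by
    intro p hK
    have : Nonempty S := Filter.nonempty_of_neBot ↑p
    exact hK JSetUltra jsetUltra_ideal
  exact ⟨fun p _ hK => main p hK, fun A hA p hpp hK => hA p (main p hK) hpp⟩
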